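/- For all integers s ≥ 1 and t ≥ 1, one has k(s,t) < (s+1)^t. -/

import Mathlib

namespace KT

/-- encode one part `(i, a)` (part of size `a` in partition `i`) as the word
`i :: s, s, ..., s` (`a-1` copies of `s`). -/
def eP (s : ℕ) (p : ℕ × ℕ) : List ℕ := p.1 :: List.replicate (p.2 - 1) s

def eL (s : ℕ) (l : List (ℕ × ℕ)) : List ℕ := l.flatMap (eP s)

def Ok (s : ℕ) (l : List (ℕ × ℕ)) : Prop := ∀ p ∈ l, p.1 < s ∧ 1 ≤ p.2

lemma eL_nil (s : ℕ) : eL s [] = [] := rfl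

lemma eL_cons (s : ℕ) (p : ℕ × ℕ) (l : List (ℕ × ℕ)) :
    eL s (p :: l) = p.1 :: (List.replicate (p.2 - 1) s ++ eL s l) := by
  simp [eL, eP, List.flatMap_cons]

lemma eL_head {s : ℕ} {l : List (ℕ × ℕ)} (h : Ok s l) : (eL s l).head? ≠ some s := by
  cases l with
  | nil => simp [eL_nil]
  | cons p r =>
    rw [eL_cons]
    have := (h p (by simp)).1
    simp
    omega

lemma rep_cancel (c : ℕ) : ∀ (m n : ℕ) (u v : List ℕ), u.head? ≠ some c → v.head? ≠ some c →
    List.replicate m c ++ u = List.replicate n c ++ v → m = n ∧ u = v := by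
  intro m
  induction m with
  | zero =>
    intro n u v hu hv h
    cases n with
    | zero => simpa using h
    | succ k =>
      rw [List.replicate_succ] at h
      simp at h
      exfalso; apply hu; rw [h]; rfl
  | succ m ih =>
    intro n u v hu hv h
    cases n with
    | zero =>
      rw [List.replicate_succ] at h
      simp at h
      exfalso; apply hv; rw [← h]; rfl
    | succ k =>
      rw [List.replicate_succ, List.replicate_succ] at h
      simp only [List.cons_append, List.cons.injEq] at h
      obtain ⟨hm, hu'⟩ := ih k u v hu hv h.2
      exact ⟨by omega, hu'⟩

lemma eL_inj {s : ℕ} : ∀ (l₁ l₂ : List (ℕ × ℕ)), Ok s l₁ → Ok s l₂ →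
    eL s l₁ = eL s l₂ → l₁ = l₂ := by
  intro l₁
  induction l₁ with
  | nil =>
    intro l₂ _ _ h
    cases l₂ with
    | nil => rfl
    | cons p r => rw [eL_nil, eL_cons] at h; exact absurd h (by simp)
  | cons p r ih =>
    intro l₂ h₁ h₂ h
    cases l₂ with
    | nil => rw [eL_nil, eL_cons] at h; exact absurd h (by simp)
    | cons q w =>
      rw [eL_cons, eL_cons] at h
      simp only [List.cons.injEq] at h
      have hr : Ok s r := fun x hx => h₁ x (by simp [hx])
      have hw : Ok s w := fun x hx => h₂ x (by simp [hx])
      obtain ⟨hrep, htail⟩ := rep_cancel s _ _ _ _ (eL_head hr) (eL_head hw) h.2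
      have hp1 := (h₁ p (by simp)).2
      have hq1 := (h₂ q (by simp)).2
      have : p = q := Prod.ext h.1 (by omega)
      rw [this, ih w hr hw htail]

lemma mem_eL_of_mem {s : ℕ} {l : List (ℕ × ℕ)} {p : ℕ × ℕ} (h : p ∈ l) :
    p.1 ∈ eL s l := List.mem_flatMap.2 ⟨p, h, by simp [eP]⟩

lemma mem_eL {s : ℕ} {l : List (ℕ × ℕ)} (hl : Ok s l) {x : ℕ} (hx : x ∈ eL s l) :
    x < s + 1 := by
  obtain ⟨p, hp, hxp⟩ := List.mem_flatMap.1 hx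
  rcases List.mem_cons.1 hxp with h | h
  · have := (hl p hp).1; omega
  · rw [List.eq_of_mem_replicate h]; omega

lemma eL_length {s : ℕ} : ∀ (l : List (ℕ × ℕ)), Ok s l →
    (eL s l).length = (l.map Prod.snd).sum := by
  intro l
  induction l with
  | nil => intro _; rfl
  | cons p r ih =>
    intro h
    rw [eL_cons]
    have h1 := (h p (by simp)).2
    have := ih (fun x hx => h x (by simp [hx]))
    simp [this]
    omega

/-- the list of (partition index, part) pairs of a tuple of partitions -/
def lOf (s : ℕ) (f : Fin s → Σ n : ℕ, Nat.Partition n) : List (ℕ × ℕ) :=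
  (List.finRange s).flatMap
    (fun i => ((f i).2.parts.sort (· ≤ ·)).map (fun a => (i.val, a)))

lemma lOf_ok (s : ℕ) (f : Fin s → Σ n : ℕ, Nat.Partition n) : Ok s (lOf s f) := by
  intro p hp
  obtain ⟨i, _, hp⟩ := List.mem_flatMap.1 hp
  obtain ⟨a, ha, rfl⟩ := List.mem_map.1 hp
  have : a ∈ (f i).2.parts := by
    rw [← Multiset.sort_eq (f i).2.parts (· ≤ ·)]; exact_mod_cast ha
  exact ⟨i.isLt, (f i).2.parts_pos this⟩

lemma flatMap_single {α β : Type*} [DecidableEq α] (i : α) (L : List β) :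
    ∀ l : List α, l.Nodup → i ∈ l →
    (l.flatMap (fun j => if j = i then L else [])) = L := by
  intro l
  induction l with
  | nil => intro _ h; simp at h
  | cons a r ih =>
    intro hnd hm
    rw [List.flatMap_cons]
    rcases List.mem_cons.1 hm with rfl | h
    · have h0 : ∀ j ∈ r, (if j = i then L else []) = [] := by
        intro j hj
        have : j ≠ i := fun e => (List.nodup_cons.1 hnd).1 (e ▸ hj)
        simp [this]
      simp [List.flatMap_eq_nil_iff.2 h0]
    · have : a ≠ i := fun e => (List.nodup_cons.1 hnd).1 (e ▸ h)
      simp only [this, if_neg]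
      rw [ih (List.nodup_cons.1 hnd).2 h]
      simp [this]

lemma lOf_filter (s : ℕ) (f : Fin s → Σ n : ℕ, Nat.Partition n) (i : Fin s) :
    (lOf s f).filter (fun p => p.1 == i.val) =
      ((f i).2.parts.sort (· ≤ ·)).map (fun a => (i.val, a)) := by
  rw [lOf, List.filter_flatMap]
  have : ∀ j : Fin s,
      (List.filter (fun p => p.1 == i.val)
        (((f j).2.parts.sort (· ≤ ·)).map (fun a => (j.val, a)))) =
      (if j = i then ((f i).2.parts.sort (· ≤ ·)).map (fun a => (i.val, a)) else []) := by
    intro j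
    by_cases hj : j = i
    · subst hj; simp [List.filter_eq_self]
    · have : j.val ≠ i.val := fun e => hj (Fin.val_injective e)
      simp only [if_neg hj]
      rw [List.filter_eq_nil_iff]
      intro p hp
      obtain ⟨a, _, rfl⟩ := List.mem_map.1 hp
      simpa using this
  calc (List.finRange s).flatMap (fun j => List.filter (fun p => p.1 == i.val)
        (((f j).2.parts.sort (· ≤ ·)).map (fun a => (j.val, a))))
      = (List.finRange s).flatMap (fun j =>
          if j = i then ((f i).2.parts.sort (· ≤ ·)).map (fun a => (i.val, a)) else []) := by
        simp only [this]
    _ = _ := flatMap_single i _ _ (List.nodup_finRange s) (List.mem_finRange i)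

lemma sigma_part_eq {n m : ℕ} {P : Nat.Partition n} {Q : Nat.Partition m}
    (h : P.parts = Q.parts) : (⟨n, P⟩ : Σ n, Nat.Partition n) = ⟨m, Q⟩ := by
  have hnm : n = m := by rw [← P.parts_sum, ← Q.parts_sum, h]
  subst hnm
  exact congrArg _ (Nat.Partition.ext h)

lemma lOf_inj (s : ℕ) : Function.Injective (lOf s) := by
  intro f g h
  funext i
  have hf := lOf_filter s f i
  have hg := lOf_filter s g i
  rw [h] at hf
  have hmap := hf.symm.trans hg
  have hsort : ((f i).2.parts.sort (· ≤ ·)) = ((g i).2.parts.sort (· ≤ ·)) := by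
    have : Function.Injective (fun a : ℕ => (i.val, a)) := by
      intro a b hab; simpa using hab
    exact List.map_injective_iff.2 this hmap
  have hparts : (f i).2.parts = (g i).2.parts := by
    rw [← Multiset.sort_eq (f i).2.parts (· ≤ ·), ← Multiset.sort_eq (g i).2.parts (· ≤ ·),
      hsort]
  exact sigma_part_eq hparts

lemma lOf_snd_sum (s : ℕ) (f : Fin s → Σ n : ℕ, Nat.Partition n) :
    ((lOf s f).map Prod.snd).sum = ∑ i, (f i).1 := by
  rw [lOf, List.map_flatMap, Fin.sum_univ_def]
  rw [List.flatMap, List.sum_flatten, List.map_map]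
  congr 1
  apply List.map_congr_left
  intro i _
  simp only [Function.comp, List.map_map]
  have : (Prod.snd ∘ fun a : ℕ => (i.val, a)) = id := rfl
  rw [this, List.map_id]
  calc ((f i).2.parts.sort (· ≤ ·)).sum
      = ((f i).2.parts.sort (· ≤ ·) : Multiset ℕ).sum := by
        rw [Multiset.sum_coe]
    _ = (f i).2.parts.sum := by rw [Multiset.sort_eq]
    _ = (f i).1 := (f i).2.parts_sum

/-- the word of a tuple of partitions -/
def wOf (s : ℕ) (f : Fin s → Σ n : ℕ, Nat.Partition n) : List ℕ := eL s (lOf s f)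

lemma wOf_length {s t : ℕ} {f : Fin s → Σ n : ℕ, Nat.Partition n}
    (h : ∑ i, (f i).1 = t) : (wOf s f).length = t := by
  rw [wOf, eL_length _ (lOf_ok s f), lOf_snd_sum, h]

lemma wOf_lt (s : ℕ) (f : Fin s → Σ n : ℕ, Nat.Partition n) {x : ℕ} (hx : x ∈ wOf s f) :
    x < s + 1 := mem_eL (lOf_ok s f) hx

lemma wOf_ne_replicate {s t : ℕ} (ht : 1 ≤ t) {f : Fin s → Σ n : ℕ, Nat.Partition n}
    (h : ∑ i, (f i).1 = t) : wOf s f ≠ List.replicate t s := by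
  intro hrep
  cases hl : lOf s f with
  | nil =>
    have := wOf_length h
    rw [wOf, hl, eL_nil] at this
    simp at this; omega
  | cons p r =>
    have hmem : p.1 ∈ wOf s f := by
      rw [wOf, hl]; exact mem_eL_of_mem (by simp)
    rw [hrep] at hmem
    have := List.eq_of_mem_replicate hmem
    have hp := (lOf_ok s f p (by rw [hl]; simp)).1
    omega

end KT

/-- `kTuples s t` is the number of `s`-tuples `(λ₁, …, λ_s)` of integer partitions
(of arbitrary nonnegative integers) with `|λ₁| + ⋯ + |λ_s| = t`. -/
noncomputable def kTuples (s t : ℕ) : ℕ :=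
  Nat.card { f : Fin s → Σ n : ℕ, Nat.Partition n // ∑ i, (f i).1 = t }

theorem kTuples_lt_succ_pow (s t : ℕ) (hs : 1 ≤ s) (ht : 1 ≤ t) :
    kTuples s t < (s + 1) ^ t := by
  classical
  set α := { f : Fin s → Σ n : ℕ, Nat.Partition n // ∑ i, (f i).1 = t } with hα
  -- the encoding map
  have len : ∀ F : α, (KT.wOf s F.1).length = t := fun F => KT.wOf_length F.2
  let Φ : α → (Fin t → Fin (s + 1)) := fun F j =>
    ⟨(KT.wOf s F.1).get (Fin.cast (len F).symm j),
      KT.wOf_lt s F.1 (List.get_mem _ _)⟩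
  have hΦinj : Function.Injective Φ := by
    intro F G hFG
    have hw : KT.wOf s F.1 = KT.wOf s G.1 := by
      apply List.ext_get (by rw [len F, len G])
      intro n h₁ h₂
      have := congrFun hFG ⟨n, by rw [← len F]; exact h₁⟩
      simpa [Φ] using congrArg Fin.val this
    exact Subtype.ext (KT.lOf_inj s (KT.eL_inj _ _ (KT.lOf_ok s F.1) (KT.lOf_ok s G.1) hw))
  have hΦmiss : (fun _ : Fin t => (⟨s, by omega⟩ : Fin (s + 1))) ∉ Set.range Φ := by
    rintro ⟨F, hF⟩
    apply KT.wOf_ne_replicate ht F.2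
    apply List.ext_get (by rw [len F, List.length_replicate])
    intro n h₁ h₂
    have := congrFun hF ⟨n, by rw [← len F]; exact h₁⟩
    have hv := congrArg Fin.val this
    simp [Φ] at hv
    simp [hv]
  haveI : Fintype α := Fintype.ofInjective Φ hΦinj
  have : kTuples s t = Fintype.card α := by
    rw [kTuples, ← hα, Nat.card_eq_fintype_card]
  rw [this]
  calc Fintype.card α < Fintype.card (Fin t → Fin (s + 1)) :=
        Fintype.card_lt_of_injective_of_notMem Φ hΦinj hΦmiss
    _ = (s + 1) ^ t := by rw [Fintype.card_fun]; simp
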